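/- For every real number μ with 0 < |μ| < 1, the quantity maxT(μ,β) attains its minimum over β ∈ ℝ, the minimum value is |μ|/(1 + √(1−μ²)), and the minimum is attained if and only if β = βN(μ) = (1−√(1−μ²))/(1+√(1−μ²)). Concretely: (i) maxT(μ,β) ≥ |μ|/(1+√(1−μ²)) for all β ∈ ℝ; (ii) maxT(μ, βN(μ)) = |μ|/(1+√(1−μ²)); (iii) if maxT(μ,β) = |μ|/(1+√(1−μ²)) for some β ∈ ℝ, then β = βN(μ). -/

import Mathlib

/-- The maximum of the moduli of the two complex roots (counted with multiplicity) of
`λ² − (1+β)·μ·λ + β = 0`; the roots are given by the quadratic formula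
`((1+β)μ ± √((1+β)²μ² − 4β))/2` (complex square root via `cpow`). -/
noncomputable def maxT (μ β : ℝ) : ℝ :=
  max (‖(((((1 + β) * μ : ℝ) : ℂ) +
        ((((1 + β) ^ 2 * μ ^ 2 - 4 * β : ℝ) : ℂ)) ^ ((1 : ℂ) / 2)) / 2)‖)
      (‖(((((1 + β) * μ : ℝ) : ℂ) -
        ((((1 + β) ^ 2 * μ ^ 2 - 4 * β : ℝ) : ℂ)) ^ ((1 : ℂ) / 2)) / 2)‖)

/-- The optimal coefficient `βN(μ) = (1 − √(1−μ²))/(1 + √(1−μ²))`. -/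
noncomputable def βN (μ : ℝ) : ℝ :=
  (1 - Real.sqrt (1 - μ ^ 2)) / (1 + Real.sqrt (1 - μ ^ 2))

lemma cpow_half_sq (z : ℂ) : (z ^ ((1:ℂ)/2)) * (z ^ ((1:ℂ)/2)) = z := by
  rcases eq_or_ne z 0 with rfl | hz
  · rw [Complex.zero_cpow (by norm_num)]; ring
  · rw [← Complex.cpow_add _ _ hz]; norm_num

lemma cpow_half_of_nonneg {D : ℝ} (h : 0 ≤ D) :
    ((D : ℂ)) ^ ((1:ℂ)/2) = ((Real.sqrt D : ℝ) : ℂ) := by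
  rw [show ((1:ℂ)/2) = (((1/2 : ℝ) : ℂ)) by norm_num,
    ← Complex.ofReal_cpow h, ← Real.sqrt_eq_rpow]

lemma maxT_nonneg (μ β : ℝ) : 0 ≤ maxT μ β :=
  le_trans (norm_nonneg _) (le_max_left _ _)

lemma abs_le_maxT_sq (μ β : ℝ) : |β| ≤ (maxT μ β)^2 := by
  set w := ((((1 + β) ^ 2 * μ ^ 2 - 4 * β : ℝ) : ℂ)) ^ ((1 : ℂ) / 2) with hw
  have hsq : w * w = (((1 + β) ^ 2 * μ ^ 2 - 4 * β : ℝ) : ℂ) := cpow_half_sq _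
  have hprod : ((((1 + β) * μ : ℝ) : ℂ) + w) / 2 * (((((1 + β) * μ : ℝ) : ℂ) - w) / 2)
      = (β : ℂ) := by
    push_cast [hw] at hsq ⊢
    linear_combination (-(1:ℂ)/4) * hsq
  have habs : ‖(((((1 + β) * μ : ℝ) : ℂ) + w) / 2)‖ *
      ‖(((((1 + β) * μ : ℝ) : ℂ) - w) / 2)‖ = |β| := by
    rw [← norm_mul, hprod, Complex.norm_real, Real.norm_eq_abs]
  rw [← habs]
  have h1 := le_max_left (‖(((((1 + β) * μ : ℝ) : ℂ) + w) / 2)‖)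
    (‖(((((1 + β) * μ : ℝ) : ℂ) - w) / 2)‖)
  have h2 := le_max_right (‖(((((1 + β) * μ : ℝ) : ℂ) + w) / 2)‖)
    (‖(((((1 + β) * μ : ℝ) : ℂ) - w) / 2)‖)
  have := norm_nonneg (((((1 + β) * μ : ℝ) : ℂ) - w) / 2)
  rw [maxT, sq]
  exact mul_le_mul h1 h2 this (maxT_nonneg μ β)

lemma maxT_eq_real (μ β : ℝ) (h : 0 ≤ (1+β)^2*μ^2 - 4*β) :
    maxT μ β = max |((1+β)*μ + Real.sqrt ((1+β)^2*μ^2-4*β))/2|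
               |((1+β)*μ - Real.sqrt ((1+β)^2*μ^2-4*β))/2| := by
  rw [maxT, cpow_half_of_nonneg h]
  congr 1
  · rw [← Real.norm_eq_abs, ← Complex.norm_real]; congr 1; push_cast; ring
  · rw [← Real.norm_eq_abs, ← Complex.norm_real]; congr 1; push_cast; ring

set_option maxHeartbeats 2000000 in
theorem stmt13 (μ : ℝ) (h0 : 0 < |μ|) (h1 : |μ| < 1) :
    (∀ β : ℝ, |μ| / (1 + Real.sqrt (1 - μ ^ 2)) ≤ maxT μ β) ∧
    maxT μ (βN μ) = |μ| / (1 + Real.sqrt (1 - μ ^ 2)) ∧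
    (∀ β : ℝ, maxT μ β = |μ| / (1 + Real.sqrt (1 - μ ^ 2)) → β = βN μ) := by
  have hμ0 : 0 < μ ^ 2 := by nlinarith [sq_abs μ]
  have hμ1 : μ ^ 2 < 1 := by nlinarith [sq_abs μ]
  obtain ⟨s, hsdef⟩ : ∃ x, x = Real.sqrt (1 - μ ^ 2) := ⟨_, rfl⟩
  rw [← hsdef]
  have hs2 : s ^ 2 = 1 - μ ^ 2 := by rw [hsdef]; exact Real.sq_sqrt (by nlinarith)
  have hμs : μ ^ 2 = 1 - s ^ 2 := by linarith
  have hs0 : 0 < s := by rw [hsdef]; exact Real.sqrt_pos.2 (by nlinarith)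
  have hs1 : s < 1 := by nlinarith
  have h1s : (0:ℝ) < 1 + s := by linarith
  obtain ⟨t, htdef⟩ : ∃ x, x = |μ| / (1 + s) := ⟨_, rfl⟩
  rw [← htdef]
  have ht0 : 0 ≤ t := by rw [htdef]; positivity
  have ht2 : t ^ 2 = (1 - s) / (1 + s) := by
    rw [htdef, div_pow, sq_abs, div_eq_div_iff (by positivity) h1s.ne']
    linear_combination (1 + s) * hs2
  have hβN : βN μ = (1 - s) / (1 + s) := by simp only [βN]; rw [← hsdef]
  have hβN0 : 0 < βN μ := by rw [hβN]; exact div_pos (by linarith) h1s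
  have htβ : t ^ 2 = βN μ := by rw [ht2, hβN]
  have e1 : t ^ 2 * (1 + s) = 1 - s := by rw [ht2]; field_simp
  -- strict lower bound off the optimum
  have key : ∀ β : ℝ, β ≠ βN μ → t < maxT μ β := by
    intro β hne
    rcases lt_trichotomy β (βN μ) with hlt | heq | hgt
    · rcases lt_or_ge β (-(βN μ)) with hlt2 | hge2
      · have h2 : t ^ 2 < |β| := by
          rw [htβ, abs_of_neg (by linarith : β < 0)]; linarith
        exact lt_of_pow_lt_pow_left₀ 2 (maxT_nonneg μ β)
          (lt_of_lt_of_le h2 (abs_le_maxT_sq μ β))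
      · -- real roots regime with g < 0
        have hc : β * (1 + s) < 1 - s := by
          rw [hβN, lt_div_iff₀ h1s] at hlt; linarith
        have hc2 : -(1 - s) ≤ β * (1 + s) := by
          rw [hβN, ← neg_div] at hge2
          exact (div_le_iff₀ h1s).mp hge2
        have hD : 0 < (1+β)^2*μ^2 - 4*β := by
          have hfact : ((1+β)^2*μ^2 - 4*β) * (1+s)^2
              = (1+s) * (((1-s) - β*(1+s)) * ((1+s)^2 - (1-s)*(β*(1+s)))) := by
            linear_combination ((1+β)^2*(1+s)^2) * hμs
          have h3 : 0 < (1-s) - β*(1+s) := by linarith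
          have h4 : 0 < (1+s)^2 - (1-s)*(β*(1+s)) := by
            nlinarith [mul_lt_mul_of_pos_left hc (show (0:ℝ) < 1-s by linarith)]
          have hpos : 0 < ((1+β)^2*μ^2 - 4*β) * (1+s)^2 := by
            rw [hfact]; exact mul_pos h1s (mul_pos h3 h4)
          by_contra hcon2
          push_neg at hcon2
          have hnp : ((1+β)^2*μ^2 - 4*β) * (1+s)^2 ≤ 0 :=
            mul_nonpos_iff.mpr (Or.inr ⟨hcon2, sq_nonneg _⟩)
          linarith
        have hDle := le_of_lt hD
        obtain ⟨q, hqdef⟩ : ∃ x, x = Real.sqrt ((1+β)^2*μ^2 - 4*β) := ⟨_, rfl⟩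
        have hq2 : q ^ 2 = (1+β)^2*μ^2 - 4*β := by rw [hqdef]; exact Real.sq_sqrt hDle
        have hM := maxT_eq_real μ β hDle
        rw [← hqdef] at hM
        have ht2m : t^2 * μ^2 = (1-s)^2 := by
          linear_combination t^2 * hμs + (1-s) * e1
        have hgneg : (t^2 - (((1+β)*μ + q)/2)^2) * (t^2 - (((1+β)*μ - q)/2)^2) < 0 := by
          have hident : (t^2 - (((1+β)*μ + q)/2)^2) * (t^2 - (((1+β)*μ - q)/2)^2)
              = (t^2 + β)^2 - t^2 * ((1+β)*μ)^2 := by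
            linear_combination (-t^2/2 - (((1+β)*μ)^2 - q^2 + 4*β)/16) * hq2
          rw [hident]
          have hL : 0 ≤ (1-s) + β*(1+s) := by linarith
          have hRL : (1-s) + β*(1+s) < (1-s)*((1+s) + β*(1+s)) := by
            nlinarith [mul_pos hs0 (show (0:ℝ) < (1-s) - β*(1+s) by linarith)]
          have h4 : ((1-s) + β*(1+s))^2 < ((1-s)*((1+s) + β*(1+s)))^2 := by
            nlinarith [hL, hRL]
          have h5 : (t^2 + β)^2 * (1+s)^2 = ((1-s) + β*(1+s))^2 := by
            linear_combination ((t^2+β)*(1+s) + (1-s) + β*(1+s)) * e1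
          have h6 : t^2 * ((1+β)*μ)^2 * (1+s)^2 = ((1-s)*((1+s) + β*(1+s)))^2 := by
            linear_combination ((1+β)^2*(1+s)^2) * ht2m
          have h8 : ((t^2 + β)^2 - t^2 * ((1+β)*μ)^2) * (1+s)^2 < 0 := by
            rw [sub_mul, h5, h6]; linarith
          by_contra hcon3
          push_neg at hcon3
          have : 0 ≤ ((t^2 + β)^2 - t^2 * ((1+β)*μ)^2) * (1+s)^2 :=
            mul_nonneg hcon3 (sq_nonneg _)
          linarith
        by_contra hcon
        push_neg at hcon
        rw [hM] at hcon
        have ha1 : |((1+β)*μ + q)/2| ≤ t := le_trans (le_max_left _ _) hcon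
        have ha2 : |((1+β)*μ - q)/2| ≤ t := le_trans (le_max_right _ _) hcon
        have b1 : (((1+β)*μ + q)/2)^2 ≤ t^2 := by
          rw [← sq_abs]; exact pow_le_pow_left₀ (abs_nonneg _) ha1 2
        have b2 : (((1+β)*μ - q)/2)^2 ≤ t^2 := by
          rw [← sq_abs]; exact pow_le_pow_left₀ (abs_nonneg _) ha2 2
        linarith [mul_nonneg (sub_nonneg.2 b1) (sub_nonneg.2 b2), hgneg]
    · exact absurd heq hne
    · have h2 : t ^ 2 < |β| := by
        rw [htβ]; exact lt_of_lt_of_le hgt (le_abs_self β)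
      exact lt_of_pow_lt_pow_left₀ 2 (maxT_nonneg μ β)
        (lt_of_lt_of_le h2 (abs_le_maxT_sq μ β))
  -- value at the optimum
  have hD0 : (1 + βN μ)^2 * μ^2 - 4 * (βN μ) = 0 := by
    rw [hβN]
    field_simp
    linear_combination 4 * hs2
  have hval : maxT μ (βN μ) = t := by
    rw [maxT_eq_real μ (βN μ) (le_of_eq hD0.symm), hD0, Real.sqrt_zero, add_zero,
      sub_zero, max_self]
    have h7 : (1 + βN μ) * μ / 2 = μ / (1 + s) := by
      rw [hβN]; field_simp; ring
    rw [h7, abs_div, abs_of_pos h1s, htdef]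
  refine ⟨?_, hval, ?_⟩
  · intro β
    rcases eq_or_ne β (βN μ) with rfl | hne
    · exact le_of_eq hval.symm
    · exact le_of_lt (key β hne)
  · intro β hβ
    by_contra hne
    exact absurd hβ (ne_of_gt (key β hne))
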